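/- arXiv:2001.02893 — 2 statements merged into one kernel-verified Lean document; each statement's English description precedes it below -/
import Mathlib

section
/- Let M and X be smooth manifolds, A ⊆ M a closed set, and f : M → X a continuous map that is smooth on A, i.e., there is an open set U ⊇ A such that the restriction of f to U is C^∞. Then there exists a smooth map g : M → X with g = f on A and a continuous homotopy H : M × [0,1] → X from f to g that is relative to A, i.e., H(a,t) = f(a) for all a ∈ A and t ∈ [0,1]. -/
open scoped Manifold
open Set Metric

section Step

variable {E : Type*} [NormedAddCommGroup E] [NormedSpace ℝ E] [FiniteDimensional ℝ E]
    {H : Type*} [TopologicalSpace H] {IM : ModelWithCorners ℝ E H} [IM.Boundaryless]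
    {M : Type*} [TopologicalSpace M] [ChartedSpace H M] [IsManifold IM (⊤ : ℕ∞) M]
    [T2Space M] [SigmaCompactSpace M]
    {E' : Type*} [NormedAddCommGroup E'] [NormedSpace ℝ E']
    {H' : Type*} [TopologicalSpace H'] {IX : ModelWithCorners ℝ E' H'} [IX.Boundaryless]
    {X : Type*} [MetricSpace X] [ChartedSpace H' X] [IsManifold IX (⊤ : ℕ∞) X]

theorem whitney_step
    (h : M → X) (hh : Continuous h)
    (A' S : Set M) (hA' : IsClosed A') (hSo : IsOpen S) (hA'S : A' ⊆ S)
    (hsm : ContMDiffOn IM IX (⊤ : ℕ∞) h S)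
    (Vn V''n : Set M) (hVo : IsOpen Vn) (hV''V : closure V''n ⊆ Vn)
    (χ : M → ℝ) (hχ : ContMDiff IM 𝓘(ℝ) (⊤ : ℕ∞) χ) (hχ0 : EqOn χ 0 (V''n)ᶜ)
    (hχ01 : ∀ x, χ x ∈ Icc (0:ℝ) 1)
    (x₀ : X) (T : Set X) (hTsub : T ⊆ (extChartAt IX x₀).source)
    (hhC : ∀ x ∈ closure Vn, h x ∈ T)
    (ρ β : ℝ) (hρ : 0 < ρ) (hβ : 0 ≤ β)
    (hballs : ∀ y ∈ T, ball (extChartAt IX x₀ y) ρ ⊆ (extChartAt IX x₀).target)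
    (hread : ∀ y ∈ T, ∀ v ∈ ball (extChartAt IX x₀ y) ρ,
       dist ((extChartAt IX x₀).symm v) y ≤ β) :
    ∃ (h' : M → X) (F : M → ℝ → X),
      Continuous h' ∧
      ContMDiffOn IM IX (⊤ : ℕ∞) h' (S ∪ interior {x | χ x = 1}) ∧
      (∀ x ∈ A', h' x = h x) ∧
      (∀ x, dist (h' x) (h x) ≤ β) ∧
      (∀ x, x ∉ Vn → h' x = h x) ∧
      Continuous (fun q : M × ℝ => F q.1 q.2) ∧
      (∀ x s, s ≤ 0 → F x s = h x) ∧
      (∀ x s, 1 ≤ s → F x s = h' x) ∧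
      (∀ x ∈ A', ∀ s, F x s = h x) ∧
      (∀ x, x ∉ Vn → ∀ s, F x s = h x) := by
  classical
  set ψ := extChartAt IX x₀ with hψdef
  set e : M → E' := fun y => ψ (h y) with hedef
  set C : Set M := closure Vn with hCdef
  have hCcl : IsClosed C := isClosed_closure
  have hsrc : ∀ x ∈ C, h x ∈ ψ.source := fun x hx => hTsub (hhC x hx)
  -- the smooth approximate section in chart coordinates
  have hconv : ∀ x : M, Convex ℝ
      (if x ∈ C then (if x ∈ A' then {e x} else ball (e x) ρ) else univ) := by
    intro x
    split_ifs
    · exact convex_singleton _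
    · exact convex_ball _ _
    · exact convex_univ
  have hecontAt : ∀ x ∈ C, ContinuousAt e x := by
    intro x hx
    exact ((continuousOn_extChartAt x₀).continuousAt
      ((isOpen_extChartAt_source x₀).mem_nhds (hsrc x hx))).comp hh.continuousAt
  have Hloc : ∀ x : M, ∃ N ∈ nhds x, ∃ gg : M → E', ContMDiffOn IM 𝓘(ℝ, E') (⊤ : ℕ∞) gg N ∧
      ∀ y ∈ N, gg y ∈ (if y ∈ C then (if y ∈ A' then {e y} else ball (e y) ρ) else univ) := by
    intro x
    by_cases hxC : x ∈ C
    · by_cases hxA : x ∈ A'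
      · refine ⟨S ∩ h ⁻¹' ψ.source, ?_, e, ?_, ?_⟩
        · exact Filter.inter_mem (hSo.mem_nhds (hA'S hxA))
            (hh.continuousAt.preimage_mem_nhds
              ((isOpen_extChartAt_source x₀).mem_nhds (hsrc x hxC)))
        · refine ContMDiffOn.comp (t := ψ.source) ?_ (hsm.mono inter_subset_left)
            (fun y hy => hy.2)
          rw [hψdef, extChartAt_source]
          exact contMDiffOn_extChartAt
        · intro y _
          split_ifs with h1 h2
          · exact rfl
          · exact mem_ball_self hρ
          · trivial
      · have hball : e ⁻¹' ball (e x) ρ ∈ nhds x :=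
          (hecontAt x hxC).preimage_mem_nhds (ball_mem_nhds _ hρ)
        refine ⟨A'ᶜ ∩ e ⁻¹' ball (e x) ρ, Filter.inter_mem (hA'.isOpen_compl.mem_nhds hxA) hball,
          fun _ => e x, contMDiffOn_const, ?_⟩
        intro y hy
        split_ifs with h1 h2
        · exact absurd h2 hy.1
        · rw [mem_ball, dist_comm]; exact hy.2
        · trivial
    · refine ⟨Cᶜ, hCcl.isOpen_compl.mem_nhds hxC, fun _ => 0, contMDiffOn_const, ?_⟩
      intro y hy
      rw [if_neg hy]
      trivial
  obtain ⟨gsel, hgsel⟩ := exists_contMDiffMap_forall_mem_convex_of_local IM hconv Hloc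
  have hg_ball : ∀ x ∈ C, gsel x ∈ ball (e x) ρ := by
    intro x hx
    have := hgsel x
    rw [if_pos hx] at this
    split_ifs at this with h1
    · rw [this]; exact mem_ball_self hρ
    · exact this
  have hg_A' : ∀ x ∈ C, x ∈ A' → gsel x = e x := by
    intro x hx hxA
    have := hgsel x
    rwa [if_pos hx, if_pos hxA, mem_singleton_iff] at this
  -- key membership estimates
  have hkey : ∀ x ∈ C, ∀ a : ℝ, |a| ≤ 1 → e x + a • (gsel x - e x) ∈ ball (e x) ρ := by
    intro x hx a ha
    rw [mem_ball, dist_eq_norm, add_sub_cancel_left, norm_smul]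
    calc ‖a‖ * ‖gsel x - e x‖ ≤ 1 * ‖gsel x - e x‖ := by
          exact mul_le_mul_of_nonneg_right ha (norm_nonneg _)
      _ = ‖gsel x - e x‖ := one_mul _
      _ < ρ := by
          have := hg_ball x hx
          rwa [mem_ball, dist_eq_norm] at this
  have htgt : ∀ x ∈ C, ∀ a : ℝ, |a| ≤ 1 → e x + a • (gsel x - e x) ∈ ψ.target :=
    fun x hx a ha => hballs (h x) (hhC x hx) (hkey x hx a ha)
  have habs : ∀ x (s : ℝ), |max 0 (min 1 s) * χ x| ≤ 1 := by
    intro x s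
    rw [abs_mul]
    have h1 : |max 0 (min 1 s)| ≤ 1 := by
      rw [abs_of_nonneg (le_max_left 0 _)]
      exact max_le zero_le_one (min_le_left _ _)
    have h2 : |χ x| ≤ 1 := abs_le.2 ⟨by linarith [(hχ01 x).1], (hχ01 x).2⟩
    calc |max 0 (min 1 s)| * |χ x| ≤ 1 * 1 := mul_le_mul h1 h2 (abs_nonneg _) zero_le_one
      _ = 1 := one_mul 1
  have habsχ : ∀ x, |χ x| ≤ 1 := fun x => abs_le.2 ⟨by linarith [(hχ01 x).1], (hχ01 x).2⟩
  set f' : M → X := fun x => if x ∈ Vn then ψ.symm (e x + χ x • (gsel x - e x)) else h x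
    with hf'def
  set F : M → ℝ → X := fun x s =>
    if x ∈ Vn then ψ.symm (e x + (max 0 (min 1 s) * χ x) • (gsel x - e x)) else h x with hFdef
  have hleft : ∀ x ∈ C, ψ.symm (e x) = h x := fun x hx => ψ.left_inv (hsrc x hx)
  -- f' = h off the support region
  have hoff : ∀ x, x ∉ closure V''n → f' x = h x := by
    intro x hx
    by_cases hxV : x ∈ Vn
    · have hχx : χ x = 0 := hχ0 (fun hmem => hx (subset_closure hmem))
      simp only [hf'def, if_pos hxV, hχx, zero_smul, add_zero]
      exact hleft x (subset_closure hxV)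
    · simp only [hf'def, if_neg hxV]
  have hFoff : ∀ x, x ∉ closure V''n → ∀ s, F x s = h x := by
    intro x hx s
    by_cases hxV : x ∈ Vn
    · have hχx : χ x = 0 := hχ0 (fun hmem => hx (subset_closure hmem))
      simp only [hFdef, if_pos hxV, hχx, mul_zero, zero_smul, add_zero]
      exact hleft x (subset_closure hxV)
    · simp only [hFdef, if_neg hxV]
  -- equal to h on A'
  have hA'eq : ∀ x ∈ A', f' x = h x := by
    intro x hxA
    by_cases hxV : x ∈ Vn
    · simp only [hf'def, if_pos hxV, hg_A' x (subset_closure hxV) hxA, sub_self, smul_zero,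
        add_zero]
      exact hleft x (subset_closure hxV)
    · simp only [hf'def, if_neg hxV]
  have hFA' : ∀ x ∈ A', ∀ s, F x s = h x := by
    intro x hxA s
    by_cases hxV : x ∈ Vn
    · simp only [hFdef, if_pos hxV, hg_A' x (subset_closure hxV) hxA, sub_self, smul_zero,
        add_zero]
      exact hleft x (subset_closure hxV)
    · simp only [hFdef, if_neg hxV]
  -- continuity of f'
  have hf'cont : Continuous f' := by
    rw [continuous_iff_continuousAt]
    intro x
    by_cases hxV : x ∈ Vn
    · have hxC : x ∈ C := subset_closure hxV
      have hinner : ContinuousAt (fun y => e y + χ y • (gsel y - e y)) x := by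
        exact (hecontAt x hxC).add
          ((hχ.continuous.continuousAt).smul ((gsel.contMDiff.continuous.continuousAt).sub
            (hecontAt x hxC)))
      have houter : ContinuousAt ψ.symm (e x + χ x • (gsel x - e x)) := by
        refine (continuousOn_extChartAt_symm x₀).continuousAt
          ((isOpen_extChartAt_target x₀).mem_nhds ?_)
        exact htgt x hxC (χ x) (habsχ x)
      have hcomp : ContinuousAt (fun y => ψ.symm (e y + χ y • (gsel y - e y))) x :=
        ContinuousAt.comp (f := fun y => e y + χ y • (gsel y - e y)) houter hinner
      refine ContinuousAt.congr hcomp ?_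
      filter_upwards [hVo.mem_nhds hxV] with y hy
      simp only [hf'def, if_pos hy, Function.comp]
    · have hxout : x ∈ (closure V''n)ᶜ := fun hmem => hxV (hV''V hmem)
      refine ContinuousAt.congr hh.continuousAt ?_
      filter_upwards [isClosed_closure.isOpen_compl.mem_nhds hxout] with y hy
      exact (hoff y hy).symm
  -- smoothness of f'
  have hR (y : M) (hy : y ∈ interior {x | χ x = 1}) : y ∈ Vn := by
    have h1 : y ∈ {x | χ x = 1} := interior_subset hy
    rw [mem_setOf_eq] at h1
    by_contra hyV
    by_cases hyV'' : y ∈ V''n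
    · exact hyV (hV''V (subset_closure hyV''))
    · rw [hχ0 hyV''] at h1
      exact one_ne_zero h1.symm
  have hsm' : ContMDiffOn IM IX (⊤ : ℕ∞) f' (S ∪ interior {x | χ x = 1}) := by
    have hat : ∀ x ∈ S ∪ interior {x | χ x = 1}, ContMDiffAt IM IX (⊤ : ℕ∞) f' x := by
      rintro x (hxS | hxR)
      · by_cases hxV : x ∈ Vn
        · have hxC : x ∈ C := subset_closure hxV
          have hesm : ContMDiffAt IM 𝓘(ℝ, E') (⊤ : ℕ∞) e x := by
            have h1 : ContMDiffAt IX 𝓘(ℝ, E') (⊤ : ℕ∞) ψ (h x) := by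
              refine ContMDiffOn.contMDiffAt (contMDiffOn_extChartAt (x := x₀)) ?_
              rw [← extChartAt_source (I := IX)]
              exact (isOpen_extChartAt_source x₀).mem_nhds (hsrc x hxC)
            exact ContMDiffAt.comp (f := h) x h1 (hsm.contMDiffAt (hSo.mem_nhds hxS))
          have hinner : ContMDiffAt IM 𝓘(ℝ, E') (⊤ : ℕ∞) (fun y => e y + χ y • (gsel y - e y)) x :=
            hesm.add ((hχ.contMDiffAt).smul ((gsel.contMDiff.contMDiffAt).sub hesm))
          have houter : ContMDiffAt 𝓘(ℝ, E') IX (⊤ : ℕ∞) ψ.symm (e x + χ x • (gsel x - e x)) := by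
            refine ContMDiffOn.contMDiffAt (contMDiffOn_extChartAt_symm x₀)
              ((isOpen_extChartAt_target x₀).mem_nhds ?_)
            exact htgt x hxC (χ x) (habsχ x)
          have hcomp : ContMDiffAt IM IX (⊤ : ℕ∞) (fun y => ψ.symm (e y + χ y • (gsel y - e y))) x :=
            ContMDiffAt.comp (f := fun y => e y + χ y • (gsel y - e y)) x houter hinner
          refine hcomp.congr_of_eventuallyEq ?_
          filter_upwards [hVo.mem_nhds hxV] with y hy
          simp only [hf'def, if_pos hy]
        · have hxout : x ∈ (closure V''n)ᶜ := fun hmem => hxV (hV''V hmem)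
          refine (hsm.contMDiffAt (hSo.mem_nhds hxS)).congr_of_eventuallyEq ?_
          filter_upwards [isClosed_closure.isOpen_compl.mem_nhds hxout] with y hy
          exact hoff y hy
      · have hxV : x ∈ Vn := hR x hxR
        have hxC : x ∈ C := subset_closure hxV
        have houter : ContMDiffAt 𝓘(ℝ, E') IX (⊤ : ℕ∞) ψ.symm (gsel x) := by
          refine ContMDiffOn.contMDiffAt (contMDiffOn_extChartAt_symm x₀)
            ((isOpen_extChartAt_target x₀).mem_nhds ?_)
          exact hballs (h x) (hhC x hxC) (hg_ball x hxC)
        have hcomp : ContMDiffAt IM IX (⊤ : ℕ∞) (fun y => ψ.symm (gsel y)) x :=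
          ContMDiffAt.comp (f := fun y => gsel y) x houter gsel.contMDiff.contMDiffAt
        refine hcomp.congr_of_eventuallyEq ?_
        filter_upwards [isOpen_interior.mem_nhds hxR] with y hy
        have hyV : y ∈ Vn := hR y hy
        have hy1 : y ∈ {x | χ x = 1} := interior_subset hy
        rw [mem_setOf_eq] at hy1
        simp only [hf'def, if_pos hyV, hy1, one_smul, add_sub_cancel]
    exact fun x hx => (hat x hx).contMDiffWithinAt
  -- distance bound
  have hdist : ∀ x, dist (f' x) (h x) ≤ β := by
    intro x
    by_cases hxV : x ∈ Vn
    · have hxC : x ∈ C := subset_closure hxV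
      have h1 : f' x = ψ.symm (e x + χ x • (gsel x - e x)) := if_pos hxV
      rw [h1]
      exact hread (h x) (hhC x hxC) _ (hkey x hxC (χ x) (habsχ x))
    · have h1 : f' x = h x := if_neg hxV
      rw [h1, dist_self]
      exact hβ
  -- joint continuity of F
  have hFcont : Continuous fun q : M × ℝ => F q.1 q.2 := by
    rw [continuous_iff_continuousAt]
    rintro ⟨x, s⟩
    by_cases hxV : x ∈ Vn
    · have hxC : x ∈ C := subset_closure hxV
      have hc : ContinuousAt (fun q : M × ℝ => max 0 (min 1 q.2) * χ q.1) (x, s) :=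
        ((continuous_const.max (continuous_const.min continuous_snd)).mul
          (hχ.continuous.comp continuous_fst)).continuousAt
      have hE : ContinuousAt (fun q : M × ℝ => e q.1) (x, s) :=
        ContinuousAt.comp (f := fun q : M × ℝ => q.1) (x := (x, s)) (hecontAt x hxC) continuousAt_fst
      have hG : ContinuousAt (fun q : M × ℝ => gsel q.1) (x, s) :=
        (gsel.contMDiff.continuous.comp continuous_fst).continuousAt
      have hinner : ContinuousAt
          (fun q : M × ℝ => e q.1 + (max 0 (min 1 q.2) * χ q.1) • (gsel q.1 - e q.1)) (x, s) :=
        hE.add (hc.smul (hG.sub hE))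
      have houter : ContinuousAt ψ.symm
          (e x + (max 0 (min 1 s) * χ x) • (gsel x - e x)) := by
        refine (continuousOn_extChartAt_symm x₀).continuousAt
          ((isOpen_extChartAt_target x₀).mem_nhds ?_)
        exact htgt x hxC _ (habs x s)
      have hcomp : ContinuousAt (fun q : M × ℝ =>
          ψ.symm (e q.1 + (max 0 (min 1 q.2) * χ q.1) • (gsel q.1 - e q.1))) (x, s) :=
        ContinuousAt.comp
          (f := fun q : M × ℝ => e q.1 + (max 0 (min 1 q.2) * χ q.1) • (gsel q.1 - e q.1))
          houter hinner
      refine ContinuousAt.congr hcomp ?_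
      filter_upwards [prod_mem_nhds (hVo.mem_nhds hxV) Filter.univ_mem] with q hq
      simp only [hFdef, if_pos hq.1]
    · have hxout : x ∈ (closure V''n)ᶜ := fun hmem => hxV (hV''V hmem)
      refine ContinuousAt.congr (hh.continuousAt.comp (continuousAt_fst)) ?_
      filter_upwards [prod_mem_nhds
        (isClosed_closure.isOpen_compl.mem_nhds hxout) Filter.univ_mem] with q hq
      exact (hFoff q.1 hq.1 q.2).symm
  -- endpoint identities
  have hF0 : ∀ x (s : ℝ), s ≤ 0 → F x s = h x := by
    intro x s hs
    by_cases hxV : x ∈ Vn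
    · have h1 : max 0 (min 1 s) = 0 := max_eq_left ((min_le_right 1 s).trans hs)
      simp only [hFdef, if_pos hxV, h1, zero_mul, zero_smul, add_zero]
      exact hleft x (subset_closure hxV)
    · simp only [hFdef, if_neg hxV]
  have hF1 : ∀ x (s : ℝ), 1 ≤ s → F x s = f' x := by
    intro x s hs
    have h1 : max 0 (min 1 s) = 1 := by
      rw [min_eq_left hs, max_eq_right zero_le_one]
    by_cases hxV : x ∈ Vn
    · simp only [hFdef, hf'def, if_pos hxV, h1, one_mul]
    · simp only [hFdef, hf'def, if_neg hxV]
  exact ⟨f', F, hf'cont, hsm', hA'eq, hdist,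
    fun x hx => by simp only [hf'def, if_neg hx], hFcont, hF0, hF1, hFA',
    fun x hx s => by simp only [hFdef, if_neg hx]⟩

end Step

section Main

variable {E : Type*} [NormedAddCommGroup E] [NormedSpace ℝ E] [FiniteDimensional ℝ E]
    {H : Type*} [TopologicalSpace H] {IM : ModelWithCorners ℝ E H} [IM.Boundaryless]
    {M : Type*} [TopologicalSpace M] [ChartedSpace H M] [IsManifold IM (⊤ : ℕ∞) M]
    [T2Space M] [SecondCountableTopology M]
    {E' : Type*} [NormedAddCommGroup E'] [NormedSpace ℝ E'] [FiniteDimensional ℝ E']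
    {H' : Type*} [TopologicalSpace H'] {IX : ModelWithCorners ℝ E' H'} [IX.Boundaryless]
    {X : Type*} [MetricSpace X] [ChartedSpace H' X] [IsManifold IX (⊤ : ℕ∞) X]

theorem whitney_aux
    (f : M → X) (hf : Continuous f)
    (A : Set M) (hA : IsClosed A)
    (U : Set M) (hU : IsOpen U) (hAU : A ⊆ U) (hfU : ContMDiffOn IM IX (⊤ : ℕ∞) f U) :
    ∃ g : M → X, ContMDiff IM IX (⊤ : ℕ∞) g ∧ (∀ a ∈ A, g a = f a) ∧
      ∃ Hh : M × unitInterval → X, Continuous Hh ∧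
        (∀ x : M, Hh (x, 0) = f x) ∧ (∀ x : M, Hh (x, 1) = g x) ∧
        (∀ a ∈ A, ∀ t : unitInterval, Hh (a, t) = f a) := by
  classical
  haveI : LocallyCompactSpace M := Manifold.locallyCompact_of_finiteDimensional IM
  haveI : LocallyCompactSpace X := Manifold.locallyCompact_of_finiteDimensional IX
  rcases isEmpty_or_nonempty M with hM | hM
  · refine ⟨f, fun x => isEmptyElim x, fun a _ => rfl,
      ⟨fun p => f p.1, continuous_of_const (fun p _ => isEmptyElim p.1),
        fun x => isEmptyElim x, fun x => isEmptyElim x, fun a _ _ => isEmptyElim a⟩⟩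
  obtain ⟨xM⟩ := hM
  -- shrink `A` into an open set with closure inside `U`
  obtain ⟨U₀, hU₀o, hAU₀, hU₀U⟩ := normal_exists_closure_subset hA hU hAU
  set A' : Set M := closure U₀ with hA'def
  have hA'U : A' ⊆ U := hU₀U
  -- base cover by preimages of charts
  have hO : ∀ x : M, ∃ O : Set M, IsOpen O ∧ x ∈ O ∧ IsCompact (closure O) ∧
      MapsTo f (closure O) (extChartAt IX (f x)).source := by
    intro x
    have h1 : f ⁻¹' (extChartAt IX (f x)).source ∈ nhds x :=
      hf.continuousAt.preimage_mem_nhds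
        ((isOpen_extChartAt_source (f x)).mem_nhds (mem_extChartAt_source (f x)))
    obtain ⟨K, hKn, hKsub, hKcpt⟩ := local_compact_nhds h1
    refine ⟨interior K, isOpen_interior, mem_interior_iff_mem_nhds.2 hKn, ?_, ?_⟩
    · exact hKcpt.of_isClosed_subset isClosed_closure
        (closure_minimal interior_subset hKcpt.isClosed)
    · intro y hy
      exact hKsub (closure_minimal interior_subset hKcpt.isClosed hy)
  choose O hOo hOx hOc hOmaps using hO
  -- locally finite refinement
  obtain ⟨v, hvo, hvU, hvlf, hvsub⟩ := precise_refinement O hOo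
    (iUnion_eq_univ_iff.2 fun x => ⟨x, hOx x⟩)
  -- countable reindexing by ℕ
  set ι := {z : M // (v z).Nonempty} with hιdef
  have hvlf' : LocallyFinite (fun i : ι => v i.1) := hvlf.comp_injective Subtype.val_injective
  haveI : Countable ι := countable_univ_iff.1 (hvlf'.countable_univ (fun i => i.2))
  haveI : Encodable ι := Encodable.ofCountable ι
  set V : ℕ → Set M := fun n => (Encodable.decode₂ ι n).elim ∅ (fun i => v i.1) with hVdef
  set bp : ℕ → M := fun n => (Encodable.decode₂ ι n).elim xM (fun i => i.1) with hbpdef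
  have hVo : ∀ n, IsOpen (V n) := by
    intro n
    rw [hVdef]
    cases h : Encodable.decode₂ ι n with
    | none => simp [h, isOpen_empty]
    | some i => simp [h, hvo i.1]
  have hVO : ∀ n, V n ⊆ O (bp n) := by
    intro n
    rw [hVdef, hbpdef]
    cases h : Encodable.decode₂ ι n with
    | none => simp [h]
    | some i => simpa [h] using hvsub i.1
  have hVcover : ⋃ n, V n = univ := by
    rw [iUnion_eq_univ_iff]
    intro x
    have : x ∈ ⋃ z, v z := by rw [hvU]; trivial
    obtain ⟨z, hz⟩ := mem_iUnion.1 this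
    refine ⟨Encodable.encode (⟨z, ⟨x, hz⟩⟩ : ι), ?_⟩
    rw [hVdef]
    simp [Encodable.decode₂_encode]
    exact hz
  have hVlf : LocallyFinite V := by
    intro x
    obtain ⟨N, hN, hfin⟩ := hvlf' x
    refine ⟨N, hN, ?_⟩
    have hsub : {n | (V n ∩ N).Nonempty} ⊆
        Encodable.encode '' {i : ι | ((fun i : ι => v i.1) i ∩ N).Nonempty} := by
      intro n hn
      obtain ⟨y, hy1, hy2⟩ := hn
      simp only [hVdef] at hy1
      cases h : Encodable.decode₂ ι n with
      | none => rw [h] at hy1; simp at hy1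
      | some i =>
        rw [h] at hy1
        simp only [Option.elim] at hy1
        exact ⟨i, ⟨y, hy1, hy2⟩, Encodable.mem_decode₂.1 (h ▸ rfl)⟩
    exact (hfin.image _).subset hsub
  -- shrink the cover twice
  obtain ⟨V'', hV''U, hV''o, hV''cl⟩ :=
    exists_iUnion_eq_closure_subset hVo hVlf.point_finite hVcover
  have hV''pf : ∀ x : M, {n | x ∈ V'' n}.Finite := by
    intro x
    refine (hVlf.point_finite x).subset ?_
    intro n hn
    exact hV''cl n (subset_closure hn)
  obtain ⟨V', hV'U, hV'o, hV'cl⟩ := exists_iUnion_eq_closure_subset hV''o hV''pf hV''U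
  -- compact closures mapping into charts
  set Cc : ℕ → Set M := fun n => closure (V n) with hCcdef
  have hCcl : ∀ n, IsClosed (Cc n) := fun n => isClosed_closure
  have hCc : ∀ n, IsCompact (Cc n) := fun n =>
    (hOc (bp n)).of_isClosed_subset isClosed_closure (closure_mono (hVO n))
  have hCf : ∀ n, MapsTo f (Cc n) (extChartAt IX (f (bp n))).source := fun n y hy =>
    hOmaps (bp n) (closure_mono (hVO n) hy)
  have hCclf : LocallyFinite Cc := hVlf.closure
  -- compact neighbourhoods of `f '' Cc n` in the chart sources
  have hT : ∀ n, ∃ Tc : Set X, IsCompact Tc ∧ f '' (Cc n) ⊆ interior Tc ∧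
      Tc ⊆ (extChartAt IX (f (bp n))).source := fun n =>
    exists_compact_between ((hCc n).image hf) (isOpen_extChartAt_source _)
      ((image_subset_iff).2 (hCf n))
  choose Tc hTcpt hTint hTsub using hT
  -- safety radii η
  have hη : ∀ n, ∃ η > (0:ℝ), ∀ x ∈ Cc n, ball (f x) (2*η) ⊆ interior (Tc n) := by
    intro n
    obtain ⟨ε, hε, hthick⟩ := ((hCc n).image hf).exists_thickening_subset_open
      isOpen_interior (hTint n)
    refine ⟨ε/2, by linarith, fun x hx => ?_⟩
    have h2 : (2:ℝ) * (ε/2) = ε := by ring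
    rw [h2]
    exact (ball_subset_thickening (mem_image_of_mem f hx) ε).trans hthick
  choose η hη0 hηsub using hη
  -- smooth positive gauge δ
  have hδex : ∃ δ : C^(⊤ : ℕ∞)⟮IM, M; 𝓘(ℝ, ℝ), ℝ⟯, ∀ x : M,
      δ x ∈ Ioi (0:ℝ) ∩ Iic 1 ∩ ⋂ (n : ℕ) (_ : x ∈ Cc n), Iio (η n) := by
    refine exists_contMDiffMap_forall_mem_convex_of_local_const IM ?_ ?_
    · intro x
      exact ((convex_Ioi _).inter (convex_Iic _)).inter
        (convex_iInter fun n => convex_iInter fun _ => convex_Iio _)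
    · intro x
      obtain ⟨N, hN, hfin⟩ := hCclf x
      set Fs : Finset ℕ := hfin.toFinset with hFsdef
      set m : ℝ := (insert (1:ℝ) (Fs.image η)).min' (Finset.insert_nonempty _ _) with hmdef
      have hm1 : m ≤ 1 := Finset.min'_le _ _ (Finset.mem_insert_self _ _)
      have hmpos : 0 < m := by
        have := (insert (1:ℝ) (Fs.image η)).min'_mem (Finset.insert_nonempty _ _)
        rw [← hmdef] at this
        rcases Finset.mem_insert.1 this with h | h
        · rw [h]; exact one_pos
        · obtain ⟨n, _, hn⟩ := Finset.mem_image.1 h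
          rw [← hn]; exact hη0 n
      refine ⟨m/2, ?_⟩
      filter_upwards [hN] with y hy
      refine ⟨⟨mem_Ioi.2 (div_pos hmpos two_pos), mem_Iic.2 (by linarith)⟩, ?_⟩
      refine mem_iInter.2 fun n => mem_iInter.2 fun hyn => mem_Iio.2 ?_
      have hnF : n ∈ Fs := by
        rw [hFsdef, Set.Finite.mem_toFinset]
        exact ⟨y, hyn, hy⟩
      have hmn : m ≤ η n := Finset.min'_le _ _
        (Finset.mem_insert_of_mem (Finset.mem_image_of_mem η hnF))
      linarith
  obtain ⟨δ, hδmem⟩ := hδex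
  have hδpos : ∀ x, 0 < δ x := fun x => (hδmem x).1.1
  have hδ1 : ∀ x, δ x ≤ 1 := fun x => (hδmem x).1.2
  have hδη : ∀ n, ∀ x ∈ Cc n, δ x < η n := by
    intro n x hx
    have := (hδmem x).2
    rw [mem_iInter] at this
    have := this n
    rw [mem_iInter] at this
    exact this hx
  -- uniform per-chart lower bounds β
  have hβex : ∀ n, ∃ β > (0:ℝ), ∀ x ∈ Cc n, β ≤ ((2:ℝ)^(n+1))⁻¹ * δ x := by
    intro n
    rcases (Cc n).eq_empty_or_nonempty with he | hne
    · exact ⟨1, one_pos, fun x hx => absurd hx (by rw [he]; exact notMem_empty x)⟩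
    · have hcont : ContinuousOn (fun x => ((2:ℝ)^(n+1))⁻¹ * δ x) (Cc n) :=
        (continuous_const.mul δ.contMDiff.continuous).continuousOn
      obtain ⟨z, hz, hzmin⟩ := (hCc n).exists_isMinOn hne hcont
      refine ⟨((2:ℝ)^(n+1))⁻¹ * δ z, mul_pos (by positivity) (hδpos z), fun x hx => hzmin hx⟩
  choose β hβ0 hβle using hβex
  -- chart estimates: radii ρ
  have hρex : ∀ n, ∃ ρ > (0:ℝ),
      (∀ y ∈ interior (Tc n), ball (extChartAt IX (f (bp n)) y) ρ ⊆
        (extChartAt IX (f (bp n))).target) ∧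
      (∀ y ∈ interior (Tc n), ∀ w ∈ ball (extChartAt IX (f (bp n)) y) ρ,
        dist ((extChartAt IX (f (bp n))).symm w) y ≤ β n) := by
    intro n
    set ψ := extChartAt IX (f (bp n)) with hψdef
    set K : Set E' := ψ '' (Tc n) with hKdef
    have hKcpt : IsCompact K := (hTcpt n).image_of_continuousOn
      ((continuousOn_extChartAt _).mono (hTsub n))
    have hKtgt : K ⊆ ψ.target := by
      rintro _ ⟨y, hy, rfl⟩
      exact ψ.map_source (hTsub n hy)
    obtain ⟨ε₁, hε₁, hthick⟩ := hKcpt.exists_thickening_subset_open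
      (isOpen_extChartAt_target _) hKtgt
    set L : Set E' := Metric.cthickening (ε₁/2) K with hLdef
    have hLcpt : IsCompact L := hKcpt.cthickening
    have hLtgt : L ⊆ ψ.target :=
      (Metric.cthickening_subset_thickening' hε₁ (by linarith) K).trans hthick
    have huc := hLcpt.uniformContinuousOn_of_continuous
      ((continuousOn_extChartAt_symm _).mono hLtgt)
    rw [Metric.uniformContinuousOn_iff] at huc
    obtain ⟨d, hd, hucd⟩ := huc (β n) (hβ0 n)
    refine ⟨min (ε₁/2) d, lt_min (by linarith) hd, ?_, ?_⟩
    · intro y hy w hw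
      have hψK : ψ y ∈ K := mem_image_of_mem _ (interior_subset hy)
      refine hthick ?_
      rw [Metric.mem_thickening_iff]
      exact ⟨ψ y, hψK, lt_of_lt_of_le (lt_of_lt_of_le (mem_ball.1 hw) (min_le_left _ _))
        (by linarith)⟩
    · intro y hy w hw
      have hψK : ψ y ∈ K := mem_image_of_mem _ (interior_subset hy)
      have hwL : w ∈ L := Metric.mem_cthickening_of_dist_le w (ψ y) _ _ hψK
        (le_of_lt (lt_of_lt_of_le (mem_ball.1 hw) (min_le_left _ _)))
      have hψL : ψ y ∈ L := Metric.self_subset_cthickening _ hψK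
      have := hucd w hwL (ψ y) hψL
        (lt_of_lt_of_le (mem_ball.1 hw) (min_le_right _ _))
      rw [ψ.left_inv (hTsub n (interior_subset hy))] at this
      exact this.le
  choose ρ hρ0 hρtgt hρread using hρex
  -- smooth bump functions
  have hχex : ∀ n, ∃ χ : C^(⊤ : ℕ∞)⟮IM, M; 𝓘(ℝ, ℝ), ℝ⟯, EqOn χ 0 (V'' n)ᶜ ∧
      EqOn χ 1 (closure (V' n)) ∧ ∀ x, χ x ∈ Icc (0:ℝ) 1 := by
    intro n
    refine exists_contMDiffMap_zero_one_of_isClosed IM (hV''o n).isClosed_compl isClosed_closure ?_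
    rw [disjoint_left]
    intro x hx hx'
    exact hx (hV'cl n hx')
  choose χ hχc0 hχc1 hχ01 using hχex
  -- the increasing family of smoothness domains
  set Sd : ℕ → Set M := fun i => U ∪ ⋃ j ∈ Finset.range i, interior {x | χ j x = 1}
    with hSddef
  have hSo : ∀ i, IsOpen (Sd i) := fun i =>
    hU.union (isOpen_biUnion fun _ _ => isOpen_interior)
  have hSmono : ∀ i j, i ≤ j → Sd i ⊆ Sd j := by
    intro i j hij
    refine union_subset_union_right U ?_
    refine iUnion₂_subset fun k hk => ?_
    exact subset_iUnion₂ (s := fun k _ => interior {x | χ k x = 1}) k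
      (Finset.mem_range.2 (lt_of_lt_of_le (Finset.mem_range.1 hk) hij))
  have hSsucc : ∀ i, Sd (i+1) = Sd i ∪ interior {x | χ i x = 1} := by
    intro i
    rw [hSddef]
    simp only [Finset.range_add_one, Finset.set_biUnion_insert]
    rw [union_assoc, union_comm (interior {x | χ i x = 1})]
  have hA'S : ∀ i, A' ⊆ Sd i := fun i => hA'U.trans subset_union_left
  -- the invariant
  set Inv : ℕ → (M → X) → Prop := fun i h => Continuous h ∧ EqOn h f A' ∧
      ContMDiffOn IM IX (⊤ : ℕ∞) h (Sd i) ∧ ∀ x, dist (h x) (f x) ≤ (1 - ((2:ℝ)^i)⁻¹) * δ x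
    with hInvdef
  have hInv0 : Inv 0 f := by
    refine ⟨hf, fun x _ => rfl, ?_, ?_⟩
    · have : Sd 0 = U := by simp [hSddef]
      rw [this]
      exact hfU
    · intro x
      simp [dist_self]
  -- the one-step improvement
  have hstep : ∀ i (h : M → X), Inv i h → ∃ p : (M → X) × (M → ℝ → X),
      Inv (i+1) p.1 ∧ Continuous (fun q : M × ℝ => p.2 q.1 q.2) ∧
      (∀ x (s:ℝ), s ≤ 0 → p.2 x s = h x) ∧ (∀ x (s:ℝ), 1 ≤ s → p.2 x s = p.1 x) ∧
      (∀ x ∈ A', ∀ s:ℝ, p.2 x s = h x) ∧ (∀ x, x ∉ V i → ∀ s:ℝ, p.2 x s = h x) ∧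
      (∀ x, x ∉ V i → p.1 x = h x) := by
    intro i h hInv
    obtain ⟨hc, hA'eq, hsm, hd⟩ := hInv
    have hhC : ∀ x ∈ Cc i, h x ∈ interior (Tc i) := by
      intro x hx
      refine hηsub i x hx ?_
      rw [mem_ball]
      have h1 : dist (h x) (f x) ≤ (1 - ((2:ℝ)^i)⁻¹) * δ x := hd x
      have h2 : (1 - ((2:ℝ)^i)⁻¹) * δ x ≤ δ x := by
        have h3 : (0:ℝ) < ((2:ℝ)^i)⁻¹ := by positivity
        nlinarith [hδpos x]
      have h4 : δ x < η i := hδη i x hx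
      have := hη0 i
      linarith
    obtain ⟨h', F, hc', hsm', hA'', hdist', hoff', hFc, hF0, hF1, hFA, hFoff⟩ :=
      whitney_step (IM := IM) (IX := IX) h hc A' (Sd i) isClosed_closure (hSo i)
        (hA'S i) hsm (V i) (V'' i) (hVo i) (hV''cl i) (χ i) (χ i).contMDiff (hχc0 i)
        (hχ01 i) (f (bp i)) (interior (Tc i)) (interior_subset.trans (hTsub i)) hhC
        (ρ i) (β i) (hρ0 i) (hβ0 i).le (hρtgt i) (hρread i)
    refine ⟨(h', F), ⟨hc', ?_, ?_, ?_⟩, hFc, hF0, hF1, hFA, hFoff, hoff'⟩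
    · exact fun x hx => (hA'' x hx).trans (hA'eq hx)
    · rw [hSsucc i]
      exact hsm'
    · intro x
      show dist (h' x) (f x) ≤ (1 - ((2:ℝ)^(i+1))⁻¹) * δ x
      have htri : dist (h' x) (f x) ≤ dist (h' x) (h x) + dist (h x) (f x) :=
        dist_triangle _ _ _
      have hpow : ((2:ℝ)^(i+1))⁻¹ + ((2:ℝ)^(i+1))⁻¹ = ((2:ℝ)^i)⁻¹ := by
        rw [pow_succ]
        field_simp
        ring
      by_cases hxV : x ∈ V i
      · have h5 : dist (h' x) (h x) ≤ β i := hdist' x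
        have h6 : β i ≤ ((2:ℝ)^(i+1))⁻¹ * δ x := hβle i x (subset_closure hxV)
        have h7 := hd x
        have hδx := hδpos x
        nlinarith
      · rw [hoff' x hxV]
        have h7 := hd x
        have h8 : ((2:ℝ)^(i+1))⁻¹ ≤ ((2:ℝ)^i)⁻¹ := by
          rw [pow_succ]
          rw [mul_inv]
          nlinarith [inv_pos.2 (pow_pos (two_pos (α := ℝ)) i), (by norm_num : ((2:ℝ))⁻¹ ≤ 1)]
        have hδx := (hδpos x).le
        nlinarith
  -- the iteration
  let chain : ∀ i : ℕ, {h : M → X // Inv i h} := fun i => Nat.rec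
    (motive := fun i => {h : M → X // Inv i h}) ⟨f, hInv0⟩
    (fun i p => ⟨(hstep i p.1 p.2).choose.1, (hstep i p.1 p.2).choose_spec.1⟩) i
  let Fh : ℕ → M → ℝ → X := fun i => (hstep i (chain i).1 (chain i).2).choose.2
  have hspec : ∀ i, Inv (i+1) (chain (i+1)).1 ∧
      Continuous (fun q : M × ℝ => Fh i q.1 q.2) ∧
      (∀ x (s:ℝ), s ≤ 0 → Fh i x s = (chain i).1 x) ∧
      (∀ x (s:ℝ), 1 ≤ s → Fh i x s = (chain (i+1)).1 x) ∧
      (∀ x ∈ A', ∀ s:ℝ, Fh i x s = (chain i).1 x) ∧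
      (∀ x, x ∉ V i → ∀ s:ℝ, Fh i x s = (chain i).1 x) ∧
      (∀ x, x ∉ V i → (chain (i+1)).1 x = (chain i).1 x) := fun i =>
    (hstep i (chain i).1 (chain i).2).choose_spec
  have hFcont : ∀ i, Continuous (fun q : M × ℝ => Fh i q.1 q.2) := fun i => (hspec i).2.1
  have hF0 : ∀ i x (s:ℝ), s ≤ 0 → Fh i x s = (chain i).1 x := fun i => (hspec i).2.2.1
  have hF1 : ∀ i x (s:ℝ), 1 ≤ s → Fh i x s = (chain (i+1)).1 x := fun i => (hspec i).2.2.2.1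
  have hFA : ∀ i, ∀ x ∈ A', ∀ s:ℝ, Fh i x s = (chain i).1 x := fun i => (hspec i).2.2.2.2.1
  have hFV : ∀ i x, x ∉ V i → ∀ s:ℝ, Fh i x s = (chain i).1 x := fun i =>
    (hspec i).2.2.2.2.2.1
  have hcV : ∀ i x, x ∉ V i → (chain (i+1)).1 x = (chain i).1 x := fun i =>
    (hspec i).2.2.2.2.2.2
  have hchainInv : ∀ i, Continuous (chain i).1 ∧ EqOn (chain i).1 f A' ∧
      ContMDiffOn IM IX (⊤ : ℕ∞) (chain i).1 (Sd i) ∧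
      ∀ x, dist ((chain i).1 x) (f x) ≤ (1 - ((2:ℝ)^i)⁻¹) * δ x := fun i => (chain i).2
  have hcA : ∀ i, EqOn (chain i).1 f A' := fun i => (hchainInv i).2.1
  -- time schedule
  set τ : ℕ → ℝ := fun i => 1 - ((2:ℝ)^i)⁻¹ with hτdef
  have hτnonneg : ∀ i, 0 ≤ τ i := by
    intro i
    have h2 : (1:ℝ) ≤ 2^i := one_le_pow₀ (by norm_num)
    have h3 : ((2:ℝ)^i)⁻¹ ≤ 1 := by
      rw [inv_le_one_iff₀]
      right; exact h2
    simp only [hτdef]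
    linarith
  have hτle1 : ∀ i, τ i ≤ 1 := by
    intro i
    have : (0:ℝ) < ((2:ℝ)^i)⁻¹ := by positivity
    simp only [hτdef]
    linarith
  have hτmono : ∀ i j, i ≤ j → τ i ≤ τ j := by
    intro i j hij
    have h1 : (2:ℝ)^i ≤ 2^j := pow_le_pow_right₀ (by norm_num) hij
    have h2 : ((2:ℝ)^j)⁻¹ ≤ ((2:ℝ)^i)⁻¹ := by
      apply inv_anti₀ (by positivity) h1
    simp only [hτdef]
    linarith
  have hτsucc : ∀ i, τ i < τ (i+1) := by
    intro i
    have h1 : (2:ℝ)^i < 2^(i+1) := by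
      rw [pow_succ]
      nlinarith [pow_pos (two_pos (α := ℝ)) i]
    have h2 : ((2:ℝ)^(i+1))⁻¹ < ((2:ℝ)^i)⁻¹ := by
      apply inv_strictAnti₀ (by positivity) h1
    simp only [hτdef]
    linarith
  have hτkey : ∀ i, (τ (i+1) - τ i) * 2^(i+1) = 1 := by
    intro i
    simp only [hτdef]
    have h1 : ((2:ℝ)^i) ≠ 0 := by positivity
    have h2 : ((2:ℝ)^(i+1)) ≠ 0 := by positivity
    field_simp
    ring
  -- the concatenated homotopies
  let G : ℕ → M → ℝ → X := fun i => Nat.rec (motive := fun _ => M → ℝ → X)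
    (fun x _ => f x)
    (fun i Gi x t => if t ≤ τ i then Gi x t else Fh i x ((t - τ i) * 2^(i+1))) i
  have hGsucc : ∀ i x t, G (i+1) x t =
      if t ≤ τ i then G i x t else Fh i x ((t - τ i) * 2^(i+1)) := fun _ _ _ => rfl
  have hGtail : ∀ i x t, τ i ≤ t → G i x t = (chain i).1 x := by
    intro i
    induction i with
    | zero => intro x t _; rfl
    | succ i _ =>
      intro x t ht
      rw [hGsucc, if_neg (not_le.2 (lt_of_lt_of_le (hτsucc i) ht))]
      refine hF1 i x _ ?_
      have h1 : τ (i+1) - τ i ≤ t - τ i := by linarith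
      have h2 := hτkey i
      nlinarith [pow_pos (two_pos (α := ℝ)) (i+1)]
  have hG0 : ∀ i x, G i x 0 = f x := by
    intro i
    induction i with
    | zero => intro x; rfl
    | succ i ih => intro x; rw [hGsucc, if_pos (hτnonneg i)]; exact ih x
  have hGA : ∀ i (a : M), a ∈ A' → ∀ t, G i a t = f a := by
    intro i
    induction i with
    | zero => intro a _ t; rfl
    | succ i ih =>
      intro a ha t
      rw [hGsucc]
      by_cases ht : t ≤ τ i
      · rw [if_pos ht]; exact ih a ha t
      · rw [if_neg ht, hFA i a ha _]
        exact hcA i ha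
  have hGcont : ∀ i, Continuous (fun q : M × ℝ => G i q.1 q.2) := by
    intro i
    induction i with
    | zero => exact hf.comp continuous_fst
    | succ i ih =>
      have hFc2 : Continuous (fun q : M × ℝ => Fh i q.1 ((q.2 - τ i) * 2^(i+1))) :=
        (hFcont i).comp (continuous_fst.prodMk
          ((continuous_snd.sub continuous_const).mul continuous_const))
      have hbd : ∀ q : M × ℝ, q.2 = τ i →
          G i q.1 q.2 = Fh i q.1 ((q.2 - τ i) * 2^(i+1)) := by
        rintro ⟨x, t⟩ ht
        simp only at ht ⊢
        rw [ht, hGtail i x (τ i) le_rfl, sub_self, zero_mul]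
        exact (hF0 i x 0 le_rfl).symm
      exact Continuous.if_le ih hFc2 continuous_snd continuous_const hbd
  -- local stabilization
  have hstab : ∀ x : M, ∃ N ∈ nhds x, ∃ i₀ : ℕ, x ∈ Sd i₀ ∧
      (∀ y ∈ N, ∀ i, i₀ ≤ i → (chain i).1 y = (chain i₀).1 y) ∧
      (∀ y ∈ N, ∀ i, i₀ ≤ i → ∀ t, G i y t = G i₀ y t) := by
    intro x
    obtain ⟨N, hN, hfin⟩ := hVlf x
    obtain ⟨j₀, hj₀⟩ : ∃ j, x ∈ V' j := by
      have : x ∈ ⋃ j, V' j := by rw [hV'U]; trivial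
      exact mem_iUnion.1 this
    set i₀ := max (j₀+1) ((hfin.toFinset.sup id) + 1) with hi₀def
    have hnotV : ∀ i, i₀ ≤ i → ∀ y ∈ N, y ∉ V i := by
      intro i hi y hyN hyV
      have h1 : i ∈ hfin.toFinset := (Set.Finite.mem_toFinset _).2 ⟨y, hyV, hyN⟩
      have h2 : i ≤ hfin.toFinset.sup id := Finset.le_sup (f := id) h1
      have h3 : (hfin.toFinset.sup id) + 1 ≤ i₀ := le_max_right _ _
      omega
    have hxS : x ∈ Sd i₀ := by
      have hj₀lt : j₀ ∈ Finset.range i₀ := Finset.mem_range.2 (by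
        have := le_max_left (j₀+1) ((hfin.toFinset.sup id) + 1)
        omega)
      exact Or.inr (mem_biUnion hj₀lt
        (interior_maximal (fun y hy => hχc1 j₀ (subset_closure hy)) (hV'o j₀) hj₀))
    have hchainstab : ∀ y ∈ N, ∀ i, i₀ ≤ i → (chain i).1 y = (chain i₀).1 y := by
      intro y hy i hi
      induction i, hi using Nat.le_induction with
      | base => rfl
      | succ i hi ih => rw [hcV i y (hnotV i hi y hy)]; exact ih
    refine ⟨N, hN, i₀, hxS, hchainstab, ?_⟩
    intro y hy i hi
    induction i, hi using Nat.le_induction with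
    | base => intro t; rfl
    | succ i hi ih =>
      intro t
      rw [hGsucc]
      by_cases ht : t ≤ τ i
      · rw [if_pos ht]; exact ih t
      · rw [if_neg ht, hFV i y (hnotV i hi y hy), hchainstab y hy i hi]
        have hτi₀t : τ i₀ ≤ t := le_trans (hτmono i₀ i hi) (not_le.1 ht).le
        rw [hGtail i₀ y t hτi₀t]
  choose Nb hNb i₀f hSdi hstab1 hstab2 using hstab
  -- the limit map and homotopy
  set g : M → X := fun x => (chain (i₀f x)).1 x with hgdef
  have hgN : ∀ x, ∀ y ∈ Nb x, g y = (chain (i₀f x)).1 y := by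
    intro x y hy
    have hyy : y ∈ Nb y := mem_of_mem_nhds (hNb y)
    calc g y = (chain (max (i₀f x) (i₀f y))).1 y :=
          (hstab1 y y hyy _ (le_max_right _ _)).symm
      _ = (chain (i₀f x)).1 y := hstab1 x y hy _ (le_max_left _ _)
  have hHN : ∀ x, ∀ y ∈ Nb x, ∀ t, G (i₀f y) y t = G (i₀f x) y t := by
    intro x y hy t
    have hyy : y ∈ Nb y := mem_of_mem_nhds (hNb y)
    calc G (i₀f y) y t = G (max (i₀f x) (i₀f y)) y t :=
          (hstab2 y y hyy _ (le_max_right _ _) t).symm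
      _ = G (i₀f x) y t := hstab2 x y hy _ (le_max_left _ _) t
  have hgsm : ContMDiff IM IX (⊤ : ℕ∞) g := by
    intro x
    have h1 : ContMDiffAt IM IX (⊤ : ℕ∞) (chain (i₀f x)).1 x :=
      ((hchainInv (i₀f x)).2.2.1).contMDiffAt ((hSo _).mem_nhds (hSdi x))
    refine h1.congr_of_eventuallyEq ?_
    filter_upwards [hNb x] with y hy
    exact hgN x y hy
  have hgA : ∀ a ∈ A, g a = f a := fun a ha => hcA _ (subset_closure (hAU₀ ha))
  have hHcontR : Continuous (fun q : M × ℝ => G (i₀f q.1) q.1 q.2) := by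
    rw [continuous_iff_continuousAt]
    rintro ⟨x, t⟩
    refine ContinuousAt.congr ((hGcont (i₀f x)).continuousAt) ?_
    filter_upwards [prod_mem_nhds (hNb x) Filter.univ_mem] with q hq
    exact (hHN x q.1 hq.1 q.2).symm
  refine ⟨g, hgsm, hgA, ⟨fun p => G (i₀f p.1) p.1 (p.2 : ℝ), ?_, ?_, ?_, ?_⟩⟩
  · exact hHcontR.comp (continuous_fst.prodMk (continuous_subtype_val.comp continuous_snd))
  · intro x
    exact hG0 _ x
  · intro x
    exact hGtail _ x 1 (hτle1 _)
  · intro a ha t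
    exact hGA _ a (subset_closure (hAU₀ ha)) _

end Main

/-- Whitney Approximation for Manifolds, relative version: a continuous map
between smooth manifolds that is smooth (`C^∞`) on an open neighbourhood of a
closed set `A` is homotopic, relative to `A`, to a smooth map agreeing with it
on `A`. -/
theorem whitney_approx_manifold_rel
    {E : Type*} [NormedAddCommGroup E] [NormedSpace ℝ E] [FiniteDimensional ℝ E]
    {H : Type*} [TopologicalSpace H] (IM : ModelWithCorners ℝ E H) [IM.Boundaryless]
    {M : Type*} [TopologicalSpace M] [ChartedSpace H M] [IsManifold IM (⊤ : ℕ∞) M]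
    [T2Space M] [SecondCountableTopology M]
    {E' : Type*} [NormedAddCommGroup E'] [NormedSpace ℝ E'] [FiniteDimensional ℝ E']
    {H' : Type*} [TopologicalSpace H'] (IX : ModelWithCorners ℝ E' H') [IX.Boundaryless]
    {X : Type*} [TopologicalSpace X] [ChartedSpace H' X] [IsManifold IX (⊤ : ℕ∞) X]
    [T2Space X] [SecondCountableTopology X]
    (f : M → X) (hf : Continuous f)
    (A : Set M) (hA : IsClosed A)
    (U : Set M) (hU : IsOpen U) (hAU : A ⊆ U) (hfU : ContMDiffOn IM IX (⊤ : ℕ∞) f U) :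
    ∃ g : M → X, ContMDiff IM IX (⊤ : ℕ∞) g ∧ (∀ a ∈ A, g a = f a) ∧
      ∃ Hh : M × unitInterval → X, Continuous Hh ∧
        (∀ x : M, Hh (x, 0) = f x) ∧ (∀ x : M, Hh (x, 1) = g x) ∧
        (∀ a ∈ A, ∀ t : unitInterval, Hh (a, t) = f a) := by
  haveI : LocallyCompactSpace X := Manifold.locallyCompact_of_finiteDimensional IX
  haveI : TopologicalSpace.MetrizableSpace X := Manifold.metrizableSpace IX X
  letI : MetricSpace X := TopologicalSpace.metrizableSpaceMetric X
  exact whitney_aux (IM := IM) (IX := IX) f hf A hA U hU hAU hfU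
end

section
/- Let N be a smooth manifold, n ≥ 1, A ⊆ N a closed set, and f : N → ℝⁿ a continuous map that is smooth on A, i.e., C^∞ on some open set U ⊇ A. Then for every continuous function κ : N → ℝ with κ(x) > 0 for all x, there exists a C^∞ map g : N → ℝⁿ such that ‖f(x) − g(x)‖ < κ(x) for every x ∈ N and g(a) = f(a) for every a ∈ A. -/
open scoped Manifold

open Set Metric

/-- Whitney Approximation Theorem, relative version: a continuous map from a
smooth manifold to `ℝⁿ` which is `C^∞` on an open neighbourhood of a closed set
`A` can be approximated within any positive continuous error function `κ` by a
`C^∞` map agreeing with it on `A`. -/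
theorem whitney_approx_euclidean_rel
    {E : Type*} [NormedAddCommGroup E] [NormedSpace ℝ E] [FiniteDimensional ℝ E]
    {H : Type*} [TopologicalSpace H] (IN : ModelWithCorners ℝ E H) [IN.Boundaryless]
    {N : Type*} [TopologicalSpace N] [ChartedSpace H N] [IsManifold IN (⊤ : ℕ∞) N]
    [T2Space N] [SecondCountableTopology N]
    (n : ℕ) (hn : 1 ≤ n)
    (A : Set N) (hA : IsClosed A)
    (f : N → EuclideanSpace ℝ (Fin n)) (hf : Continuous f)
    (U : Set N) (hU : IsOpen U) (hAU : A ⊆ U)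
    (hfU : ContMDiffOn IN 𝓘(ℝ, EuclideanSpace ℝ (Fin n)) (⊤ : ℕ∞) f U)
    (κ : N → ℝ) (hκ : Continuous κ) (hκpos : ∀ x, 0 < κ x) :
    ∃ g : N → EuclideanSpace ℝ (Fin n),
      ContMDiff IN 𝓘(ℝ, EuclideanSpace ℝ (Fin n)) (⊤ : ℕ∞) g ∧
      (∀ x : N, ‖f x - g x‖ < κ x) ∧
      (∀ a ∈ A, g a = f a) := by
  haveI : LocallyCompactSpace N := Manifold.locallyCompact_of_finiteDimensional IN
  haveI : SigmaCompactSpace N := sigmaCompactSpace_of_locallyCompact_secondCountable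
  set t : N → Set (EuclideanSpace ℝ (Fin n)) :=
    fun x => {y | ‖f x - y‖ < κ x ∧ (x ∈ A → y = f x)} with ht_def
  have ht : ∀ x, Convex ℝ (t x) := by
    intro x
    have h1 : Convex ℝ {y : EuclideanSpace ℝ (Fin n) | ‖f x - y‖ < κ x} := by
      have : {y : EuclideanSpace ℝ (Fin n) | ‖f x - y‖ < κ x} = ball (f x) (κ x) := by
        ext y; simp [mem_ball, dist_eq_norm, norm_sub_rev]
      rw [this]; exact convex_ball _ _
    have h2 : Convex ℝ {y : EuclideanSpace ℝ (Fin n) | x ∈ A → y = f x} := by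
      by_cases hx : x ∈ A
      · have : {y : EuclideanSpace ℝ (Fin n) | x ∈ A → y = f x} = {f x} := by
          ext y; simp [hx]
        rw [this]; exact convex_singleton _
      · have : {y : EuclideanSpace ℝ (Fin n) | x ∈ A → y = f x} = univ := by
          ext y; simp [hx]
        rw [this]; exact convex_univ
    exact h1.inter h2
  have Hloc : ∀ x : N, ∃ V ∈ nhds x, ∃ g : N → EuclideanSpace ℝ (Fin n),
      ContMDiffOn IN 𝓘(ℝ, EuclideanSpace ℝ (Fin n)) (⊤ : ℕ∞) g V ∧ ∀ y ∈ V, g y ∈ t y := by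
    intro x
    by_cases hx : x ∈ U
    · exact ⟨U, hU.mem_nhds hx, f, hfU, fun y _ =>
        ⟨by simpa using hκpos y, fun _ => rfl⟩⟩
    · have hxA : x ∉ A := fun h => hx (hAU h)
      have hcont : Continuous fun y => κ y - ‖f y - f x‖ :=
        hκ.sub ((hf.sub continuous_const).norm)
      have hopen : IsOpen {y | ‖f y - f x‖ < κ y} := by
        have : {y | ‖f y - f x‖ < κ y} = (fun y => κ y - ‖f y - f x‖) ⁻¹' Ioi 0 := by
          ext y; simp [sub_pos]
        rw [this]; exact hcont.isOpen_preimage _ isOpen_Ioi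
      have hmem : x ∈ {y | ‖f y - f x‖ < κ y} ∩ Aᶜ :=
        ⟨by simpa using hκpos x, hxA⟩
      refine ⟨{y | ‖f y - f x‖ < κ y} ∩ Aᶜ, (hopen.inter hA.isOpen_compl).mem_nhds hmem,
        fun _ => f x, contMDiffOn_const, fun y hy => ⟨hy.1, fun hyA => absurd hyA hy.2⟩⟩
  obtain ⟨g, hg⟩ := exists_contMDiffMap_forall_mem_convex_of_local IN ht Hloc
  exact ⟨g, g.contMDiff, fun x => (hg x).1, fun a ha => (hg a).2 ha⟩
end
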